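/- arXiv:2011.01620 — 4 statements merged into one kernel-verified Lean document; each statement's English description precedes it below -/
import Mathlib

section
/- Let C_n = {0,1}^n, and for 1 ≤ i ≤ n+1 let 0_i, 1_i : C_n → C_{n+1} be the maps inserting 0 (resp. 1) in the i-th coordinate. For an abelian group A define R_i, S_i, P_i : ℤ[A^{C_{n+1}}] → ℤ[A^{C_n}] as the maps induced on free abelian groups by f ↦ f∘0_i, f ↦ f∘1_i, and f ↦ f∘0_i + f∘1_i respectively, and set δ = Σ_{i=1}^{n+1} (-1)^i (P_i − R_i − S_i). Then δ ∘ δ = 0, i.e. (ℤ[A^{C_*}], δ) is a chain complex. -/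
set_option synthInstance.maxHeartbeats 1000000
/-- `R_i`: induced by precomposition with the insertion of `false` (i.e. `0`) in
position `i`, on free abelian groups: `ℤ[A^{C_{n+1}}] → ℤ[A^{C_n}]`. -/
def faceR (A : Type) [AddCommGroup A] (n : ℕ) (i : Fin (n + 1)) :
    FreeAbelianGroup ((Fin (n + 1) → Bool) → A) →+ FreeAbelianGroup ((Fin n → Bool) → A) :=
  FreeAbelianGroup.map (fun f c => f (i.insertNth false c))

/-- `S_i`: induced by precomposition with the insertion of `true` (i.e. `1`) in
position `i`. -/
def faceS (A : Type) [AddCommGroup A] (n : ℕ) (i : Fin (n + 1)) :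
    FreeAbelianGroup ((Fin (n + 1) → Bool) → A) →+ FreeAbelianGroup ((Fin n → Bool) → A) :=
  FreeAbelianGroup.map (fun f c => f (i.insertNth true c))

/-- `P_i`: induced by the set map `f ↦ f∘0_i + f∘1_i` (pointwise sum in `A`). -/
def faceP (A : Type) [AddCommGroup A] (n : ℕ) (i : Fin (n + 1)) :
    FreeAbelianGroup ((Fin (n + 1) → Bool) → A) →+ FreeAbelianGroup ((Fin n → Bool) → A) :=
  FreeAbelianGroup.map (fun f c => f (i.insertNth false c) + f (i.insertNth true c))

/-- The `Q`-construction differential `δ = Σ_{i=1}^{n+1} (-1)^i (P_i - R_i - S_i)`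
(here `i : Fin (n+1)` corresponds to the position `i+1 ∈ {1, …, n+1}`). -/
def qDelta (A : Type) [AddCommGroup A] (n : ℕ) :
    FreeAbelianGroup ((Fin (n + 1) → Bool) → A) →+ FreeAbelianGroup ((Fin n → Bool) → A) :=
  ∑ i : Fin (n + 1), ((-1 : ℤ) ^ (i.1 + 1)) •
    (faceP A n i - faceR A n i - faceS A n i)

-- Fin helpers (already checked)
lemma insertNth_eval {α : Type} {n : ℕ} (i : Fin (n + 1)) (x : α) (p : Fin n → α)
    (k : Fin (n + 1)) :
    Fin.insertNth (α := fun _ => α) i x p k =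
      if h : k.1 < i.1 then p ⟨k.1, by have := i.2; omega⟩
      else if h' : k.1 = i.1 then x
      else p ⟨k.1 - 1, by have := k.2; omega⟩ := by
  rcases Nat.lt_trichotomy k.1 i.1 with hlt | heq | hgt
  · rw [dif_pos hlt, Fin.insertNth_apply_below (show k < i from hlt)]
    simp only [eq_rec_constant]
    exact congrArg p (Fin.ext (by simp))
  · rw [dif_neg (by omega), dif_pos heq]
    have : k = i := Fin.ext heq
    subst this
    exact Fin.insertNth_apply_same (α := fun _ => α) k x p
  · rw [dif_neg (by omega), dif_neg (by omega),
      Fin.insertNth_apply_above (show i < k from hgt)]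
    simp only [eq_rec_constant]
    exact congrArg p (Fin.ext (by simp))

lemma ins_comm {n : ℕ} (i k : Fin (n + 1)) (h : k.1 ≤ i.1) (x y : Bool) (c : Fin n → Bool) :
    Fin.insertNth (α := fun _ => Bool) k.castSucc y (i.insertNth x c) =
      Fin.insertNth (α := fun _ => Bool) i.succ x (k.insertNth y c) := by
  funext m
  simp only [insertNth_eval, Fin.coe_castSucc, Fin.val_succ]
  split_ifs <;>
    first
      | rfl
      | (exact congrArg c (Fin.ext (by omega)))
      | (exfalso; omega)

section Keys

variable (A : Type) [AddCommGroup A] (n : ℕ)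

def eMap (i : Fin (n + 1)) (b : Bool) :
    ((Fin (n + 1) → Bool) → A) → ((Fin n → Bool) → A) :=
  fun f c => f (i.insertNth b c)

def pMap (i : Fin (n + 1)) :
    ((Fin (n + 1) → Bool) → A) → ((Fin n → Bool) → A) :=
  fun f c => f (i.insertNth false c) + f (i.insertNth true c)

variable {n}

lemma keyEE (i k : Fin (n + 1)) (h : k.1 ≤ i.1) (x y : Bool) :
    (FreeAbelianGroup.map (eMap A n i x)).comp
        (FreeAbelianGroup.map (eMap A (n + 1) k.castSucc y)) =
      (FreeAbelianGroup.map (eMap A n k y)).comp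
        (FreeAbelianGroup.map (eMap A (n + 1) i.succ x)) := by
  rw [← FreeAbelianGroup.map_comp, ← FreeAbelianGroup.map_comp]
  congr 1
  funext f c
  simp only [eMap, Function.comp_apply]
  rw [ins_comm i k h]

lemma keyPE (i k : Fin (n + 1)) (h : k.1 ≤ i.1) (y : Bool) :
    (FreeAbelianGroup.map (pMap A n i)).comp
        (FreeAbelianGroup.map (eMap A (n + 1) k.castSucc y)) =
      (FreeAbelianGroup.map (eMap A n k y)).comp
        (FreeAbelianGroup.map (pMap A (n + 1) i.succ)) := by
  rw [← FreeAbelianGroup.map_comp, ← FreeAbelianGroup.map_comp]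
  congr 1
  funext f c
  simp only [eMap, pMap, Function.comp_apply]
  rw [ins_comm i k h, ins_comm i k h]

lemma keyEP (i k : Fin (n + 1)) (h : k.1 ≤ i.1) (x : Bool) :
    (FreeAbelianGroup.map (eMap A n i x)).comp
        (FreeAbelianGroup.map (pMap A (n + 1) k.castSucc)) =
      (FreeAbelianGroup.map (pMap A n k)).comp
        (FreeAbelianGroup.map (eMap A (n + 1) i.succ x)) := by
  rw [← FreeAbelianGroup.map_comp, ← FreeAbelianGroup.map_comp]
  congr 1
  funext f c
  simp only [eMap, pMap, Function.comp_apply]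
  rw [ins_comm i k h, ins_comm i k h]

lemma keyPP (i k : Fin (n + 1)) (h : k.1 ≤ i.1) :
    (FreeAbelianGroup.map (pMap A n i)).comp
        (FreeAbelianGroup.map (pMap A (n + 1) k.castSucc)) =
      (FreeAbelianGroup.map (pMap A n k)).comp
        (FreeAbelianGroup.map (pMap A (n + 1) i.succ)) := by
  rw [← FreeAbelianGroup.map_comp, ← FreeAbelianGroup.map_comp]
  congr 1
  funext f c
  simp only [eMap, pMap, Function.comp_apply]
  rw [ins_comm i k h, ins_comm i k h, ins_comm i k h, ins_comm i k h]
  abel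

end Keys

section HomHelpers
variable {M N P : Type} [AddCommGroup M] [AddCommGroup N] [AddCommGroup P]

lemma sub_comp' (f g : N →+ P) (h : M →+ N) : (f - g).comp h = f.comp h - g.comp h := by
  ext x; simp

lemma comp_sub' (f : N →+ P) (g h : M →+ N) : f.comp (g - h) = f.comp g - f.comp h := by
  ext x; simp

lemma sum_comp' {ι : Type} (s : Finset ι) (f : ι → (N →+ P)) (g : M →+ N) :
    (∑ i ∈ s, f i).comp g = ∑ i ∈ s, (f i).comp g := by
  ext x; simp

lemma comp_sum' {ι : Type} (s : Finset ι) (g : N →+ P) (f : ι → (M →+ N)) :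
    g.comp (∑ i ∈ s, f i) = ∑ i ∈ s, g.comp (f i) := by
  ext x; simp

lemma smul_comp' (z : ℤ) (f : N →+ P) (g : M →+ N) : (z • f).comp g = z • (f.comp g) := by
  ext x; simp

lemma comp_smul' (z : ℤ) (f : N →+ P) (g : M →+ N) : f.comp (z • g) = z • (f.comp g) := by
  ext x; simp

end HomHelpers

/-- `D_i = P_i - R_i - S_i`. -/
def qD (A : Type) [AddCommGroup A] (n : ℕ) (i : Fin (n + 1)) :
    FreeAbelianGroup ((Fin (n + 1) → Bool) → A) →+ FreeAbelianGroup ((Fin n → Bool) → A) :=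
  faceP A n i - faceR A n i - faceS A n i

lemma D_comm (A : Type) [AddCommGroup A] {n : ℕ} (i k : Fin (n + 1)) (h : k.1 ≤ i.1) :
    (qD A n i).comp (qD A (n + 1) k.castSucc) = (qD A n k).comp (qD A (n + 1) i.succ) := by
  have hP : ∀ (m : ℕ) (j : Fin (m + 1)),
      faceP A m j = FreeAbelianGroup.map (pMap A m j) := fun _ _ => rfl
  have hR : ∀ (m : ℕ) (j : Fin (m + 1)),
      faceR A m j = FreeAbelianGroup.map (eMap A m j false) := fun _ _ => rfl
  have hS : ∀ (m : ℕ) (j : Fin (m + 1)),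
      faceS A m j = FreeAbelianGroup.map (eMap A m j true) := fun _ _ => rfl
  simp only [qD, hP, hR, hS, sub_comp', comp_sub']
  rw [keyPP A i k h, keyPE A i k h false, keyPE A i k h true,
    keyEP A i k h false, keyEP A i k h true,
    keyEE A i k h false false, keyEE A i k h false true,
    keyEE A i k h true false, keyEE A i k h true true]
  abel


/-- `δ ∘ δ = 0`: `(ℤ[A^{C_*}], δ)` is a chain complex. -/
theorem qDelta_comp_qDelta (A : Type) [AddCommGroup A] (n : ℕ) :
    (qDelta A n).comp (qDelta A (n + 1)) = 0 := by
  classical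
  have hq : ∀ (m : ℕ), qDelta A m = ∑ i : Fin (m + 1), ((-1 : ℤ) ^ (i.1 + 1)) • qD A m i :=
    fun _ => rfl
  have expand : (qDelta A n).comp (qDelta A (n + 1)) =
      ∑ p : Fin (n + 1) × Fin (n + 2),
        (((-1 : ℤ) ^ (p.1.1 + 1) * (-1 : ℤ) ^ (p.2.1 + 1)) •
          ((qD A n p.1).comp (qD A (n + 1) p.2))) := by
    rw [Fintype.sum_prod_type, hq, hq, sum_comp']
    refine Finset.sum_congr rfl fun i _ => ?_
    rw [smul_comp', comp_sum']
    rw [Finset.smul_sum]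
    refine Finset.sum_congr rfl fun j _ => ?_
    rw [comp_smul', smul_smul]
  rw [expand]
  refine Finset.sum_ninvolution
    (fun p => if h : p.2.1 ≤ p.1.1
      then (⟨p.2.1, by have := p.1.2; omega⟩, ⟨p.1.1 + 1, by have := p.1.2; omega⟩)
      else (⟨p.2.1 - 1, by have := p.2.2; omega⟩, ⟨p.1.1, by have := p.1.2; omega⟩))
    ?_ ?_ (fun _ => Finset.mem_univ _) ?_
  · -- f a + f (g a) = 0
    have key0 : ∀ (i : Fin (n + 1)) (j : Fin (n + 2)) (h : j.1 ≤ i.1),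
        ((-1 : ℤ) ^ (i.1 + 1) * (-1 : ℤ) ^ (j.1 + 1)) • ((qD A n i).comp (qD A (n + 1) j))
          + ((-1 : ℤ) ^ ((⟨j.1, by have := i.2; omega⟩ : Fin (n + 1)).1 + 1) *
              (-1 : ℤ) ^ ((⟨i.1 + 1, by have := i.2; omega⟩ : Fin (n + 2)).1 + 1)) •
            ((qD A n ⟨j.1, by have := i.2; omega⟩).comp
              (qD A (n + 1) ⟨i.1 + 1, by have := i.2; omega⟩)) = 0 := by
      intro i j h
      set k : Fin (n + 1) := ⟨j.1, by have := i.2; omega⟩ with hk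
      have hj : j = k.castSucc := Fin.ext rfl
      have hsucc : (⟨i.1 + 1, by have := i.2; omega⟩ : Fin (n + 2)) = i.succ := Fin.ext rfl
      rw [hsucc, hj, D_comm A i k h, ← add_smul]
      have hval : (k.castSucc).1 = j.1 := rfl
      have : ((-1 : ℤ) ^ (i.1 + 1) * (-1 : ℤ) ^ (k.castSucc.1 + 1)
          + (-1 : ℤ) ^ (k.1 + 1) * (-1 : ℤ) ^ (i.succ.1 + 1)) = 0 := by
        simp only [Fin.coe_castSucc, Fin.val_succ, hk, pow_succ]
        ring
      rw [this, zero_smul]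
    intro a
    beta_reduce
    by_cases h : a.2.1 ≤ a.1.1
    · rw [dif_pos h]
      exact key0 a.1 a.2 h
    · rw [dif_neg h]
      have h2 : (1 : ℕ) ≤ a.2.1 := by omega
      have := key0 ⟨a.2.1 - 1, by have := a.2.2; omega⟩ ⟨a.1.1, by have := a.1.2; omega⟩
        (show a.1.1 ≤ a.2.1 - 1 by omega)
      have ej : (⟨a.1.1, by have := a.1.2; omega⟩ : Fin (n + 1)) = a.1 := Fin.ext rfl
      have e2 : (⟨a.2.1 - 1 + 1, by have := a.2.2; omega⟩ : Fin (n + 2)) = a.2 :=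
        Fin.ext (by first | (simp; omega) | simp | omega)
      rw [ej, e2] at this
      simp only at this ⊢
      exact (add_comm _ _).trans this
  · -- no fixed points
    intro a _ hEq
    beta_reduce at hEq
    by_cases h : a.2.1 ≤ a.1.1
    · rw [dif_pos h] at hEq
      have := congrArg (fun p => p.2.1) hEq
      simp only at this
      omega
    · rw [dif_neg h] at hEq
      have := congrArg (fun p => p.2.1) hEq
      simp only at this
      omega
  · -- involution
    intro a
    beta_reduce
    by_cases h : a.2.1 ≤ a.1.1
    · rw [dif_pos h, dif_neg (show ¬((⟨a.1.1 + 1, by have := a.1.2; omega⟩ : Fin (n + 2)).1 ≤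
        (⟨a.2.1, by have := a.1.2; omega⟩ : Fin (n + 1)).1) by first | (simp; omega) | simp | omega)]
      exact Prod.ext (Fin.ext (by simp)) (Fin.ext (by first | (simp; omega) | simp | omega))
    · rw [dif_neg h, dif_pos (show ((⟨a.1.1, by have := a.1.2; omega⟩ : Fin (n + 2)).1 ≤
        (⟨a.2.1 - 1, by have := a.2.2; omega⟩ : Fin (n + 1)).1) by first | (simp; omega) | simp | omega)]
      exact Prod.ext (Fin.ext (by simp)) (Fin.ext (by first | (simp; omega) | simp | omega))
end

section
/- Let p : D → E be a functor between categories which is a Cartesian (Grothendieck) fibration, and let C be any category. Then the induced functor p_* : Fun(C, D) → Fun(C, E) given by postcomposition is a Cartesian fibration, and a natural transformation in Fun(C,D) is p_*-Cartesian if and only if each of its components is p-Cartesian. -/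
open CategoryTheory

universe v₁ v₂ v₃ u₁ u₂ u₃

/-- A morphism `φ : d' ⟶ d` is `p`-Cartesian if for every `d''` and every
`ψ : d'' ⟶ d` together with a factorization `u` of `p ψ` through `p φ`, there is a
unique lift `χ : d'' ⟶ d'` with `χ ≫ φ = ψ` and `p χ = u`. (This is the pullback
condition on hom-sets.) -/
def IsCartMor {D : Type u₁} {E : Type u₂} [Category.{v₁} D] [Category.{v₂} E]
    (p : D ⥤ E) {d' d : D} (φ : d' ⟶ d) : Prop :=
  ∀ (d'' : D) (ψ : d'' ⟶ d) (u : p.obj d'' ⟶ p.obj d'),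
    u ≫ p.map φ = p.map ψ →
      ∃! χ : d'' ⟶ d', χ ≫ φ = ψ ∧ p.map χ = u

/-- `p` is a Cartesian (Grothendieck) fibration: every morphism `e ⟶ p(d)` in the
base admits a `p`-Cartesian lift with target `d`. -/
def IsCartFib {D : Type u₁} {E : Type u₂} [Category.{v₁} D] [Category.{v₂} E]
    (p : D ⥤ E) : Prop :=
  ∀ (d : D) (e : E) (f : e ⟶ p.obj d),
    ∃ (d' : D) (φ : d' ⟶ d) (h : p.obj d' = e),
      IsCartMor p φ ∧ p.map φ = eqToHom h ≫ f

section Aux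

variable {D : Type u₁} {E : Type u₂} [Category.{v₁} D] [Category.{v₂} E] (p : D ⥤ E)

/-- Cartesian morphisms are stable under precomposition with isomorphisms. -/
lemma isCartMor_comp_iso {d'' d' d : D} (θ : d'' ⟶ d') (θinv : d' ⟶ d'')
    (h1 : θ ≫ θinv = 𝟙 _) (h2 : θinv ≫ θ = 𝟙 _) {φ : d' ⟶ d}
    (hφ : IsCartMor p φ) : IsCartMor p (θ ≫ φ) := by
  intro x ψ u hu
  rw [p.map_comp, ← Category.assoc] at hu
  obtain ⟨χ', ⟨hχ'1, hχ'2⟩, hχ'u⟩ := hφ x ψ (u ≫ p.map θ) hu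
  refine ⟨χ' ≫ θinv, ⟨?_, ?_⟩, ?_⟩
  · rw [Category.assoc, ← Category.assoc θinv, h2, Category.id_comp, hχ'1]
  · rw [p.map_comp, hχ'2, Category.assoc, ← p.map_comp, h1, p.map_id, Category.comp_id]
  · intro y ⟨hy1, hy2⟩
    have : y ≫ θ = χ' := by
      refine hχ'u _ ⟨?_, ?_⟩
      · rw [Category.assoc, hy1]
      · rw [p.map_comp, hy2]
    rw [← this, Category.assoc, h1, Category.comp_id]

variable {C : Type u₃} [Category.{v₃} C]

/-- If all components of a natural transformation are `p`-Cartesian, then it is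
Cartesian for the postcomposition functor. -/
lemma isCartMor_of_components {F G : C ⥤ D} (η : F ⟶ G)
    (h : ∀ c, IsCartMor p (η.app c)) :
    IsCartMor ((Functor.whiskeringRight C D E).obj p) η := by
  intro F'' ψ u hu
  have hu' : ∀ c : C, u.app c ≫ p.map (η.app c) = p.map (ψ.app c) := by
    intro c
    have := congrArg (fun t => NatTrans.app t c) hu
    simpa using this
  -- pointwise lifts
  have L : ∀ c : C, ∃! χ : F''.obj c ⟶ F.obj c,
      χ ≫ η.app c = ψ.app c ∧ p.map χ = u.app c := fun c =>
    h c (F''.obj c) (ψ.app c) (u.app c) (hu' c)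
  let χ : ∀ c : C, F''.obj c ⟶ F.obj c := fun c => (L c).choose
  have hχ1 : ∀ c, χ c ≫ η.app c = ψ.app c := fun c => (L c).choose_spec.1.1
  have hχ2 : ∀ c, p.map (χ c) = u.app c := fun c => (L c).choose_spec.1.2
  have hχu : ∀ (c) (y : F''.obj c ⟶ F.obj c),
      y ≫ η.app c = ψ.app c ∧ p.map y = u.app c → y = χ c := fun c =>
    (L c).choose_spec.2
  have hnat : ∀ {c c' : C} (g : c ⟶ c'), F''.map g ≫ χ c' = χ c ≫ F.map g := by
    intro c c' g
    have key : ∃! t : F''.obj c ⟶ F.obj c',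
        t ≫ η.app c' = F''.map g ≫ ψ.app c' ∧
          p.map t = p.map (F''.map g) ≫ u.app c' := by
      refine h c' (F''.obj c) (F''.map g ≫ ψ.app c')
        (p.map (F''.map g) ≫ u.app c') ?_
      rw [Category.assoc, hu' c', ← p.map_comp]
    have e1 : F''.map g ≫ χ c' = key.choose := by
      refine key.choose_spec.2 _ ⟨?_, ?_⟩
      · rw [Category.assoc, hχ1]
      · rw [p.map_comp, hχ2]
    have e2 : χ c ≫ F.map g = key.choose := by
      refine key.choose_spec.2 _ ⟨?_, ?_⟩
      · rw [Category.assoc, η.naturality, ← Category.assoc, hχ1, ψ.naturality]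
      · rw [p.map_comp, hχ2]
        simpa using (u.naturality g).symm
    rw [e1, e2]
  refine ⟨⟨χ, by intro c c' g; exact hnat g⟩, ⟨?_, ?_⟩, ?_⟩
  · ext c; exact hχ1 c
  · ext c; simpa using hχ2 c
  · intro y ⟨hy1, hy2⟩
    ext c
    refine hχu c (y.app c) ⟨?_, ?_⟩
    · exact congrArg (fun t => NatTrans.app t c) hy1
    · have := congrArg (fun t => NatTrans.app t c) hy2
      simpa using this

end Aux

section Lift

variable {D : Type u₁} {E : Type u₂} [Category.{v₁} D] [Category.{v₂} E]
  {C : Type u₃} [Category.{v₃} C]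
  {p : D ⥤ E} (hp : IsCartFib p) (G : C ⥤ D) (H : C ⥤ E) (f : H ⟶ G ⋙ p)

/-- Pointwise Cartesian lift: the object. -/
noncomputable def liftObj (c : C) : D :=
  (hp (G.obj c) (H.obj c) (f.app c)).choose

/-- Pointwise Cartesian lift: the morphism. -/
noncomputable def liftHom (c : C) : liftObj hp G H f c ⟶ G.obj c :=
  (hp (G.obj c) (H.obj c) (f.app c)).choose_spec.choose

lemma liftEq (c : C) : p.obj (liftObj hp G H f c) = H.obj c :=
  (hp (G.obj c) (H.obj c) (f.app c)).choose_spec.choose_spec.choose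

lemma liftCart (c : C) : IsCartMor p (liftHom hp G H f c) :=
  (hp (G.obj c) (H.obj c) (f.app c)).choose_spec.choose_spec.choose_spec.1

lemma liftMapEq (c : C) :
    p.map (liftHom hp G H f c) = eqToHom (liftEq hp G H f c) ≫ f.app c :=
  (hp (G.obj c) (H.obj c) (f.app c)).choose_spec.choose_spec.choose_spec.2

lemma liftCond {c c' : C} (g : c ⟶ c') :
    (eqToHom (liftEq hp G H f c) ≫ H.map g ≫ eqToHom (liftEq hp G H f c').symm) ≫
        p.map (liftHom hp G H f c') =
      p.map (liftHom hp G H f c ≫ G.map g) := by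
  rw [p.map_comp, liftMapEq, liftMapEq]
  have hnat := f.naturality g
  simp only [Functor.comp_map] at hnat
  simp only [Category.assoc, eqToHom_trans, eqToHom_refl, Category.id_comp]
  rw [← hnat]
  simp

/-- Pointwise Cartesian lift: functoriality morphism. -/
noncomputable def liftMap {c c' : C} (g : c ⟶ c') :
    liftObj hp G H f c ⟶ liftObj hp G H f c' :=
  (liftCart hp G H f c' (liftObj hp G H f c) (liftHom hp G H f c ≫ G.map g)
    (eqToHom (liftEq hp G H f c) ≫ H.map g ≫ eqToHom (liftEq hp G H f c').symm)
    (liftCond hp G H f g)).choose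

lemma liftMap_spec1 {c c' : C} (g : c ⟶ c') :
    liftMap hp G H f g ≫ liftHom hp G H f c' = liftHom hp G H f c ≫ G.map g :=
  (liftCart hp G H f c' (liftObj hp G H f c) (liftHom hp G H f c ≫ G.map g)
    (eqToHom (liftEq hp G H f c) ≫ H.map g ≫ eqToHom (liftEq hp G H f c').symm)
    (liftCond hp G H f g)).choose_spec.1.1

lemma liftMap_spec2 {c c' : C} (g : c ⟶ c') :
    p.map (liftMap hp G H f g) =
      eqToHom (liftEq hp G H f c) ≫ H.map g ≫ eqToHom (liftEq hp G H f c').symm :=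
  (liftCart hp G H f c' (liftObj hp G H f c) (liftHom hp G H f c ≫ G.map g)
    (eqToHom (liftEq hp G H f c) ≫ H.map g ≫ eqToHom (liftEq hp G H f c').symm)
    (liftCond hp G H f g)).choose_spec.1.2

lemma liftMap_unique {c c' : C} (g : c ⟶ c') (y : liftObj hp G H f c ⟶ liftObj hp G H f c')
    (h1 : y ≫ liftHom hp G H f c' = liftHom hp G H f c ≫ G.map g)
    (h2 : p.map y =
      eqToHom (liftEq hp G H f c) ≫ H.map g ≫ eqToHom (liftEq hp G H f c').symm) :
    y = liftMap hp G H f g :=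
  (liftCart hp G H f c' (liftObj hp G H f c) (liftHom hp G H f c ≫ G.map g)
    (eqToHom (liftEq hp G H f c) ≫ H.map g ≫ eqToHom (liftEq hp G H f c').symm)
    (liftCond hp G H f g)).choose_spec.2 y ⟨h1, h2⟩

/-- Pointwise Cartesian lift: the lifted functor. -/
noncomputable def liftFunctor : C ⥤ D where
  obj := liftObj hp G H f
  map := liftMap hp G H f
  map_id c := by
    refine (liftMap_unique hp G H f (𝟙 c) (𝟙 _) ?_ ?_).symm
    · simp
    · simp
  map_comp {c c' c''} g g' := by
    refine (liftMap_unique hp G H f (g ≫ g') (liftMap hp G H f g ≫ liftMap hp G H f g')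
      ?_ ?_).symm
    · rw [Category.assoc, liftMap_spec1, ← Category.assoc, liftMap_spec1,
        Category.assoc, ← G.map_comp]
    · simp [p.map_comp, liftMap_spec2]

/-- Pointwise Cartesian lift: the lifted natural transformation. -/
noncomputable def liftNat : liftFunctor hp G H f ⟶ G where
  app := liftHom hp G H f
  naturality _ _ g := liftMap_spec1 hp G H f g

lemma liftFunctor_comp : liftFunctor hp G H f ⋙ p = H :=
  CategoryTheory.Functor.ext (liftEq hp G H f) (fun _ _ g => liftMap_spec2 hp G H f g)

end Lift

/-- If `p : D ⥤ E` is a Cartesian fibration, then for any category `C` the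
postcomposition functor `Fun(C, D) → Fun(C, E)` is a Cartesian fibration, and a
natural transformation is Cartesian for it if and only if all its components are
`p`-Cartesian. -/
theorem postcompose_cartFib {C : Type u₃} {D : Type u₁} {E : Type u₂}
    [Category.{v₃} C] [Category.{v₁} D] [Category.{v₂} E]
    (p : D ⥤ E) (hp : IsCartFib p) :
    IsCartFib ((Functor.whiskeringRight C D E).obj p) ∧
      ∀ (F G : C ⥤ D) (η : F ⟶ G),
        IsCartMor ((Functor.whiskeringRight C D E).obj p) η ↔
          ∀ c : C, IsCartMor p (η.app c) := by
  have mapeq : ∀ (G : C ⥤ D) (H : C ⥤ E) (f : H ⟶ G ⋙ p),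
      ((Functor.whiskeringRight C D E).obj p).map (liftNat hp G H f) =
        eqToHom (liftFunctor_comp hp G H f) ≫ f := by
    intro G H f
    ext c
    simp only [Functor.whiskeringRight_obj_map, Functor.whiskerRight_app, NatTrans.comp_app, eqToHom_app]
    exact liftMapEq hp G H f c
  constructor
  · intro G H f
    exact ⟨liftFunctor hp G H f, liftNat hp G H f, liftFunctor_comp hp G H f,
      isCartMor_of_components p _ (liftCart hp G H f), mapeq G H f⟩
  · intro F G η
    constructor
    · intro hη c
      set f : (F ⋙ p) ⟶ (G ⋙ p) := Functor.whiskerRight η p with hf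
      have hcomp := liftFunctor_comp hp G (F ⋙ p) f
      set F' := liftFunctor hp G (F ⋙ p) f with hF'
      set φ := liftNat hp G (F ⋙ p) f with hφ
      have hφcart : IsCartMor ((Functor.whiskeringRight C D E).obj p) φ :=
        isCartMor_of_components p φ (liftCart hp G (F ⋙ p) f)
      have hφmap : ((Functor.whiskeringRight C D E).obj p).map φ =
          eqToHom hcomp ≫ ((Functor.whiskeringRight C D E).obj p).map η := mapeq G (F ⋙ p) f
      obtain ⟨θ', ⟨hθ'1, hθ'2⟩, _⟩ := hη F' φ (eqToHom hcomp) hφmap.symm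
      obtain ⟨θ, ⟨hθ1, hθ2⟩, _⟩ := hφcart F η (eqToHom hcomp.symm)
        (by rw [hφmap, ← Category.assoc, eqToHom_trans, eqToHom_refl, Category.id_comp])
      have hid : θ ≫ θ' = 𝟙 F := by
        have huniq := hη F η (𝟙 _) (by simp)
        refine huniq.unique ⟨?_, ?_⟩ ⟨by simp, by simp⟩
        · rw [Category.assoc, hθ'1, hθ1]
        · rw [Functor.map_comp, hθ2, hθ'2, eqToHom_trans, eqToHom_refl]
      have hid' : θ' ≫ θ = 𝟙 F' := by
        have huniq := hφcart F' φ (𝟙 _) (by simp)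
        refine huniq.unique ⟨?_, ?_⟩ ⟨by simp, by simp⟩
        · rw [Category.assoc, hθ1, hθ'1]
        · rw [Functor.map_comp, hθ'2, hθ2, eqToHom_trans, eqToHom_refl]
      have hc1 : θ.app c ≫ θ'.app c = 𝟙 _ := by
        rw [← NatTrans.comp_app, hid]; rfl
      have hc2 : θ'.app c ≫ θ.app c = 𝟙 _ := by
        rw [← NatTrans.comp_app, hid']; rfl
      have happ : η.app c = θ.app c ≫ φ.app c := by
        rw [← hθ1]; rfl
      rw [happ]
      exact isCartMor_comp_iso p _ _ hc1 hc2 (liftCart hp G (F ⋙ p) f c)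
    · exact isCartMor_of_components p η
end

section
/- Consider a pullback square of categories E = B ×_A C with projections p : E → C and q : E → B, where g : C → A is a Cartesian fibration and b : B → A has a right adjoint b*. Then p has a right adjoint p*, the counit p p* → id is pointwise g-Cartesian, and there is a natural isomorphism q p* ≅ b* g. -/
open CategoryTheory

universe v₁ v₂ v₃ u₁ u₂ u₃

variable {A : Type u₁} {B : Type u₂} {C : Type u₃}
  [Category.{v₁} A] [Category.{v₂} B] [Category.{v₃} C]

/-- The (pseudo-)pullback `E = B ×_A C` of `b : B ⥤ A` and `g : C ⥤ A`:
objects are triples `(x, y, e)` with `e : b x ≅ g y`. -/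
structure PBObj (b : B ⥤ A) (g : C ⥤ A) where
  x : B
  y : C
  e : b.obj x ≅ g.obj y

@[ext]
structure PBHom {b : B ⥤ A} {g : C ⥤ A} (X Y : PBObj b g) where
  fb : X.x ⟶ Y.x
  fc : X.y ⟶ Y.y
  w : b.map fb ≫ Y.e.hom = X.e.hom ≫ g.map fc

instance (b : B ⥤ A) (g : C ⥤ A) : Category (PBObj b g) where
  Hom := PBHom
  id X := ⟨𝟙 _, 𝟙 _, by simp⟩
  comp f f' := ⟨f.fb ≫ f'.fb, f.fc ≫ f'.fc, by
    rw [Functor.map_comp, Functor.map_comp, Category.assoc, f'.w, ← Category.assoc,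
      f.w, Category.assoc]⟩
  id_comp f := by apply PBHom.ext <;> simp
  comp_id f := by apply PBHom.ext <;> simp
  assoc f f' f'' := by apply PBHom.ext <;> simp

/-- First projection `B ×_A C ⥤ B`. -/
def projB (b : B ⥤ A) (g : C ⥤ A) : PBObj b g ⥤ B where
  obj := PBObj.x
  map := PBHom.fb

/-- Second projection `B ×_A C ⥤ C`. -/
def projC (b : B ⥤ A) (g : C ⥤ A) : PBObj b g ⥤ C where
  obj := PBObj.y
  map := PBHom.fc

section Aux

/-- Bundled choice of `g`-Cartesian lifts of the counit components. -/
structure LiftData (b : B ⥤ A) (g : C ⥤ A) (bstar : A ⥤ B) (adj : b ⊣ bstar) where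
  L : C → C
  φ : ∀ c, L c ⟶ c
  h : ∀ c, g.obj (L c) = b.obj (bstar.obj (g.obj c))
  cart : ∀ c, IsCartMor g (φ c)
  geq : ∀ c, g.map (φ c) = eqToHom (h c) ≫ adj.counit.app (g.obj c)

variable {b : B ⥤ A} {g : C ⥤ A} {bstar : A ⥤ B} {adj : b ⊣ bstar}
  (D : LiftData b g bstar adj)

/-- The object part of `p*`. -/
abbrev pObj (c : C) : PBObj b g :=
  ⟨bstar.obj (g.obj c), D.L c, eqToIso (D.h c).symm⟩

lemma compat (X : PBObj b g) (c : C) (f : X.y ⟶ c) :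
    (X.e.inv ≫ b.map ((adj.homEquiv X.x (g.obj c)) (X.e.hom ≫ g.map f)) ≫
      eqToHom (D.h c).symm) ≫ g.map (D.φ c) = g.map f := by
  rw [D.geq]
  simp [Adjunction.homEquiv_unit, pObj]

lemma id_fc {b : B ⥤ A} {g : C ⥤ A} (X : PBObj b g) : (𝟙 X : X ⟶ X).fc = 𝟙 X.y := rfl

lemma comp_fc {b : B ⥤ A} {g : C ⥤ A} {X Y Z : PBObj b g} (f : X ⟶ Y) (f' : Y ⟶ Z) :
    (f ≫ f').fc = f.fc ≫ f'.fc := rfl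

/-- Morphism `X ⟶ pObj c` induced by `f : X.y ⟶ c`. -/
noncomputable def toHom (X : PBObj b g) (c : C) (f : X.y ⟶ c) : X ⟶ pObj D c where
  fb := (adj.homEquiv X.x (g.obj c)) (X.e.hom ≫ g.map f)
  fc := (D.cart c X.y f _ (compat D X c f)).choose
  w := by
    have := (D.cart c X.y f _ (compat D X c f)).choose_spec.1.2
    rw [show (pObj D c).e.hom = eqToHom (D.h c).symm from rfl, this]
    simp

lemma toHom_fc_comp (X : PBObj b g) (c : C) (f : X.y ⟶ c) :
    (toHom D X c f).fc ≫ D.φ c = f :=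
  (D.cart c X.y f _ (compat D X c f)).choose_spec.1.1

lemma roundtrip (X : PBObj b g) (c : C) (F : X ⟶ pObj D c) :
    F = toHom D X c (F.fc ≫ D.φ c) := by
  have hfb : F.fb = (adj.homEquiv X.x (g.obj c)) (X.e.hom ≫ g.map (F.fc ≫ D.φ c)) := by
    have w := F.w
    rw [show (pObj D c).e.hom = eqToHom (D.h c).symm from rfl] at w
    rw [Functor.map_comp, ← Category.assoc, ← w, D.geq]
    simp [Adjunction.homEquiv_unit, pObj]
  have hu : g.map F.fc =
      X.e.inv ≫ b.map ((adj.homEquiv X.x (g.obj c))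
        (X.e.hom ≫ g.map (F.fc ≫ D.φ c))) ≫ eqToHom (D.h c).symm := by
    rw [← hfb]
    have w := F.w
    rw [show (pObj D c).e.hom = eqToHom (D.h c).symm from rfl] at w
    rw [w]; simp
  have := (D.cart c X.y (F.fc ≫ D.φ c) _
      (compat D X c (F.fc ≫ D.φ c))).choose_spec.2 F.fc ⟨rfl, hu⟩
  apply PBHom.ext
  · exact hfb
  · exact this

lemma hom_ext' (X : PBObj b g) (c : C) (F G : X ⟶ pObj D c)
    (hw : F.fc ≫ D.φ c = G.fc ≫ D.φ c) : F = G := by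
  rw [roundtrip D X c F, roundtrip D X c G, hw]

/-- The functor `p*`. -/
noncomputable def pstar : C ⥤ PBObj b g where
  obj := pObj D
  map {c c'} k := toHom D (pObj D c) c' (D.φ c ≫ k)
  map_id c := by
    refine (hom_ext' D _ _ _ _ ?_).symm
    rw [toHom_fc_comp, id_fc]
    simp
  map_comp {c c' c''} k k' := by
    refine (hom_ext' D _ _ _ _ ?_).symm
    rw [toHom_fc_comp, comp_fc, Category.assoc, toHom_fc_comp, ← Category.assoc,
      toHom_fc_comp]
    simp

/-- The adjunction `projC ⊣ p*`. -/
noncomputable def pAdj : projC b g ⊣ pstar D :=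
  Adjunction.mkOfHomEquiv
    { homEquiv := fun X c =>
        { toFun := fun f => toHom D X c f
          invFun := fun F => F.fc ≫ D.φ c
          left_inv := fun f => toHom_fc_comp D X c f
          right_inv := fun F => (roundtrip D X c F).symm }
      homEquiv_naturality_left_symm := fun {X' X c} f u => by
        show (f ≫ u).fc ≫ D.φ c = (projC b g).map f ≫ (u.fc ≫ D.φ c)
        rw [comp_fc]
        simp [projC]
        exact Category.assoc _ _ _
      homEquiv_naturality_right := fun {X c c'} f k => by
        refine hom_ext' D _ _ _ _ ?_
        show (toHom D X c' (f ≫ k)).fc ≫ D.φ c'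
          = (toHom D X c f ≫ toHom D (pObj D c) c' (D.φ c ≫ k)).fc ≫ D.φ c'
        rw [toHom_fc_comp, comp_fc, Category.assoc, toHom_fc_comp, ← Category.assoc]
        erw [toHom_fc_comp] }

lemma pAdj_counit_app (c : C) : (pAdj D).counit.app c = D.φ c := by
  have : (pAdj D).counit.app c = (𝟙 (pObj D c) : pObj D c ⟶ pObj D c).fc ≫ D.φ c := rfl
  rw [this, id_fc]
  simp
  rfl

lemma pstar_map_fb {c c' : C} (k : c ⟶ c') :
    ((pstar D).map k).fb = bstar.map (g.map k) := by
  show (adj.homEquiv _ _) ((pObj D c).e.hom ≫ g.map (D.φ c ≫ k)) = _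
  rw [show (pObj D c).e.hom = eqToHom (D.h c).symm from rfl, Functor.map_comp, D.geq]
  simp [Adjunction.homEquiv_unit, pObj]

end Aux

/-- If `g : C ⥤ A` is a Cartesian fibration and `b : B ⥤ A` has a right adjoint
`b*`, then the projection `p : B ×_A C ⥤ C` has a right adjoint `p*`, the counit
`p p* ⟶ id` is pointwise `g`-Cartesian, and `q p* ≅ b* g` (where `q` is the other
projection). -/
theorem pullback_proj_right_adjoint
    (b : B ⥤ A) (g : C ⥤ A) (bstar : A ⥤ B) (adj : b ⊣ bstar)
    (hg : IsCartFib g) :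
    ∃ (pstar : C ⥤ PBObj b g) (adj' : projC b g ⊣ pstar),
      (∀ c : C, IsCartMor g (adj'.counit.app c)) ∧
      Nonempty (pstar ⋙ projB b g ≅ g ⋙ bstar) := by
  choose L φ h cart geq using fun c => hg c (b.obj (bstar.obj (g.obj c)))
    (adj.counit.app (g.obj c))
  let D : LiftData b g bstar adj := ⟨L, φ, h, cart, geq⟩
  refine ⟨pstar D, pAdj D, fun c => ?_, ⟨?_⟩⟩
  · rw [pAdj_counit_app]
    exact D.cart c
  · refine NatIso.ofComponents (fun c => Iso.refl _) (fun {c c'} k => ?_)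
    show ((pstar D).map k).fb ≫ 𝟙 _ = 𝟙 _ ≫ bstar.map (g.map k)
    rw [pstar_map_fb]
    simp
    exact Category.comp_id _
end

section
/- With Δ^op presented as the category of totally ordered sets [n] = {0, 1, …, n+1} and order-preserving maps preserving minimum and maximum, the assignment χ([n]) = ({0,…,n}, {0}), with χ(f)(i) = f(i) if f(i) ≠ m+1 and χ(f)(i) = 0 if f(i) = m+1, and with fiber orders given by the natural order on χ(f)⁻¹(j) = f⁻¹(j) for j ≥ 1 and by the concatenation f⁻¹(m+1) ⋆ f⁻¹(0) on χ(f)⁻¹(0), defines a functor χ : Δ^op → AB⊗_act. -/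
/-! The category `AB⊗_act` (raw data) and the functor `χ : Δ^op → AB⊗_act`. -/

structure ABObj : Type 1 where
  S : Type
  [fin : Fintype S]
  U : Set S

attribute [instance] ABObj.fin

structure ABHom (X Y : ABObj) where
  f : X.S → Y.S
  ord : Y.S → List X.S

def ABWf {X Y : ABObj} (F : ABHom X Y) : Prop :=
  Set.BijOn F.f X.U Y.U ∧
    (∀ t s, s ∈ F.ord t ↔ F.f s = t) ∧
    (∀ t, (F.ord t).Nodup)

def ABid (X : ABObj) : ABHom X X :=
  ⟨id, fun t => [t]⟩

def ABcomp {X Y Z : ABObj} (F : ABHom X Y) (G : ABHom Y Z) : ABHom X Z :=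
  ⟨G.f ∘ F.f, fun z => (G.ord z).flatMap F.ord⟩

/-- `Δ^op` presented via intervals: a morphism `[n] → [m]` in `Δ^op` is an
order-preserving map `{0,…,n+1} → {0,…,m+1}` preserving the minimal and maximal
elements. -/
def IntHom (n m : ℕ) : Type :=
  { φ : Fin (n + 2) → Fin (m + 2) //
      Monotone φ ∧ φ 0 = 0 ∧ φ (Fin.last (n + 1)) = Fin.last (m + 1) }

def intId (n : ℕ) : IntHom n n :=
  ⟨id, monotone_id, rfl, rfl⟩

/-- Composition of morphisms `[n] → [m] → [k]` of `Δ^op` in the interval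
presentation. -/
def intComp {n m k : ℕ} (φ : IntHom n m) (ψ : IntHom m k) : IntHom n k :=
  ⟨ψ.1 ∘ φ.1, ψ.2.1.comp φ.2.1,
    by simp only [Function.comp_apply, φ.2.2.1, ψ.2.2.1],
    by simp only [Function.comp_apply, φ.2.2.2, ψ.2.2.2]⟩

/-- `χ([n]) = ({0,…,n}, {0})`. -/
def chiObj (n : ℕ) : ABObj :=
  ⟨Fin (n + 1), ({0} : Set (Fin (n + 1)))⟩

/-- The underlying map of `χ(f)`: `χ(f)(i) = f(i)` if `f(i) ≠ m+1`, and `0` if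
`f(i) = m+1`. -/
def chiMap {n m : ℕ} (φ : IntHom n m) : Fin (n + 1) → Fin (m + 1) := fun i =>
  if h : φ.1 i.castSucc = Fin.last (m + 1) then 0 else (φ.1 i.castSucc).castPred h

/-- The fiber orders of `χ(f)`: for `j ≥ 1` the natural order on
`χ(f)⁻¹(j) = f⁻¹(j)`, and on `χ(f)⁻¹(0)` the concatenation `f⁻¹(m+1) ⋆ f⁻¹(0)`. -/
def chiOrd {n m : ℕ} (φ : IntHom n m) : Fin (m + 1) → List (Fin (n + 1)) := fun j =>
  if j = 0 then
    ((List.finRange (n + 1)).filter fun i => decide (φ.1 i.castSucc = Fin.last (m + 1))) ++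
      ((List.finRange (n + 1)).filter fun i => decide (φ.1 i.castSucc = 0))
  else
    (List.finRange (n + 1)).filter fun i => decide (chiMap φ i = j)

/-- The morphism part of `χ`. -/
def chi {n m : ℕ} (φ : IntHom n m) : ABHom (chiObj n) (chiObj m) :=
  ⟨chiMap φ, chiOrd φ⟩

/-! ### Auxiliary machinery -/

section ChiAux

open List

lemma zero_ne_last' (m : ℕ) : (0 : Fin (m + 2)) ≠ Fin.last (m + 1) := by
  simp [Fin.ext_iff]

/-- The strict order wrt which all fiber lists are sorted. -/
def relC {n k : ℕ} (C : Fin (n + 2) → Fin (k + 2)) (x y : Fin (n + 1)) : Prop :=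
  (C x.castSucc = Fin.last (k + 1) ∧ C y.castSucc ≠ Fin.last (k + 1)) ∨
    ((C x.castSucc = Fin.last (k + 1) ↔ C y.castSucc = Fin.last (k + 1)) ∧ x < y)

lemma relC_irrefl {n k : ℕ} (C : Fin (n + 2) → Fin (k + 2)) (x : Fin (n + 1)) :
    ¬ relC C x x := by
  rintro (⟨h1, h2⟩ | ⟨_, h⟩)
  · exact h2 h1
  · exact lt_irrefl _ h

lemma relC_antisymm {n k : ℕ} (C : Fin (n + 2) → Fin (k + 2)) {x y : Fin (n + 1)} :
    relC C x y → relC C y x → False := by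
  rintro (⟨h1, h2⟩ | ⟨h1, h2⟩) (⟨g1, g2⟩ | ⟨g1, g2⟩)
  · exact h2 g1
  · exact h2 (g1.mpr h1)
  · exact g2 (h1.mpr g1)
  · exact absurd h2 (not_lt.2 g2.le)

lemma list_eq_of_pairwise {α : Type*} {r : α → α → Prop}
    (hi : ∀ x, ¬ r x x) (ha : ∀ {x y}, r x y → r y x → False)
    {l₁ l₂ : List α} (h₁ : l₁.Pairwise r) (h₂ : l₂.Pairwise r)
    (hm : ∀ a, a ∈ l₁ ↔ a ∈ l₂) : l₁ = l₂ := by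
  have n₁ : l₁.Nodup := h₁.imp (fun {a b} h => by rintro rfl; exact hi _ h)
  have n₂ : l₂.Nodup := h₂.imp (fun {a b} h => by rintro rfl; exact hi _ h)
  letI : IsAntisymm α r := ⟨fun a b h h' => (ha h h').elim⟩
  exact List.Perm.eq_of_pairwise (fun a b _ _ h h' => (ha h h').elim) h₁ h₂
    ((List.perm_ext_iff_of_nodup n₁ n₂).2 hm)

lemma chiMap_eq_zero_of_last {n m : ℕ} (φ : IntHom n m) {s : Fin (n + 1)}
    (h : φ.1 s.castSucc = Fin.last (m + 1)) : chiMap φ s = 0 := by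
  simp only [chiMap]; rw [dif_pos h]

lemma chiMap_eq_of_ne_last {n m : ℕ} (φ : IntHom n m) {s : Fin (n + 1)}
    (h : φ.1 s.castSucc ≠ Fin.last (m + 1)) :
    chiMap φ s = (φ.1 s.castSucc).castPred h := by
  simp only [chiMap]; rw [dif_neg h]

lemma chiMap_zero {n m : ℕ} (φ : IntHom n m) : chiMap φ 0 = 0 := by
  have h : φ.1 (0 : Fin (n + 1)).castSucc ≠ Fin.last (m + 1) := by
    rw [Fin.castSucc_zero, φ.2.2.1]; exact zero_ne_last' m
  rw [chiMap_eq_of_ne_last φ h]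
  apply Fin.castSucc_injective
  rw [Fin.castSucc_castPred, Fin.castSucc_zero, Fin.castSucc_zero, φ.2.2.1]

lemma chiMap_cases {n m : ℕ} (φ : IntHom n m) {s : Fin (n + 1)} {t : Fin (m + 1)}
    (h : chiMap φ s = t) :
    (t = 0 ∧ φ.1 s.castSucc = Fin.last (m + 1)) ∨ φ.1 s.castSucc = t.castSucc := by
  by_cases hl : φ.1 s.castSucc = Fin.last (m + 1)
  · exact Or.inl ⟨by rw [← h, chiMap_eq_zero_of_last φ hl], hl⟩
  · right
    rw [chiMap_eq_of_ne_last φ hl] at h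
    rw [← h, Fin.castSucc_castPred]

lemma chiMap_eq_iff {n m : ℕ} (φ : IntHom n m) {s : Fin (n + 1)} {t : Fin (m + 1)}
    (ht : t ≠ 0) : chiMap φ s = t ↔ φ.1 s.castSucc = t.castSucc := by
  constructor
  · intro h
    rcases chiMap_cases φ h with ⟨h0, _⟩ | h
    · exact absurd h0 ht
    · exact h
  · intro h
    have hl : φ.1 s.castSucc ≠ Fin.last (m + 1) := by
      rw [h]; exact (Fin.castSucc_lt_last t).ne
    rw [chiMap_eq_of_ne_last φ hl]
    apply Fin.castSucc_injective
    rw [Fin.castSucc_castPred, h]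

lemma chiMap_eq_zero_iff {n m : ℕ} (φ : IntHom n m) {s : Fin (n + 1)} :
    chiMap φ s = 0 ↔ φ.1 s.castSucc = Fin.last (m + 1) ∨ φ.1 s.castSucc = 0 := by
  constructor
  · intro h
    rcases chiMap_cases φ h with ⟨_, h⟩ | h
    · exact Or.inl h
    · right; rw [h, Fin.castSucc_zero]
  · rintro (h | h)
    · exact chiMap_eq_zero_of_last φ h
    · have hl : φ.1 s.castSucc ≠ Fin.last (m + 1) := by
        rw [h]; exact zero_ne_last' m
      rw [chiMap_eq_of_ne_last φ hl]
      apply Fin.castSucc_injective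
      rw [Fin.castSucc_castPred, h, Fin.castSucc_zero]

lemma mem_chiOrd {n m : ℕ} (φ : IntHom n m) (t : Fin (m + 1)) (s : Fin (n + 1)) :
    s ∈ chiOrd φ t ↔ chiMap φ s = t := by
  unfold chiOrd
  split_ifs with h
  · subst h
    simp only [List.mem_append, List.mem_filter, List.mem_finRange, true_and,
      decide_eq_true_eq, chiMap_eq_zero_iff]
  · simp only [List.mem_filter, List.mem_finRange, true_and, decide_eq_true_eq]

lemma lt_of_apply_lt {n m : ℕ} (φ : IntHom n m) {x y : Fin (n + 1)}
    (h : φ.1 x.castSucc < φ.1 y.castSucc) : x < y :=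
  Fin.castSucc_lt_castSucc_iff.1 (φ.2.1.reflect_lt h)

lemma pairwise_filter_finRange {N : ℕ} (p : Fin N → Bool) {r : Fin N → Fin N → Prop}
    (H : ∀ x y, p x = true → p y = true → x < y → r x y) :
    ((List.finRange N).filter p).Pairwise r :=
  ((List.pairwise_lt_finRange N).filter p).imp_of_mem
    (fun {a b} ha hb h => H a b (List.of_mem_filter ha) (List.of_mem_filter hb) h)

lemma pairwise_chiOrd {n m : ℕ} (φ : IntHom n m) (j : Fin (m + 1)) :
    (chiOrd φ j).Pairwise (relC φ.1) := by
  unfold chiOrd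
  split_ifs with h
  · rw [List.pairwise_append]
    refine ⟨pairwise_filter_finRange _ ?_, pairwise_filter_finRange _ ?_, ?_⟩
    · intro x y hx hy hlt
      rw [decide_eq_true_eq] at hx hy
      exact Or.inr ⟨by rw [hx, hy], hlt⟩
    · intro x y hx hy hlt
      rw [decide_eq_true_eq] at hx hy
      exact Or.inr ⟨by rw [hx, hy], hlt⟩
    · intro x hx y hy
      rw [List.mem_filter, decide_eq_true_eq] at hx hy
      exact Or.inl ⟨hx.2, by rw [hy.2]; exact zero_ne_last' m⟩
  · apply pairwise_filter_finRange
    intro x y hx hy hlt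
    rw [decide_eq_true_eq] at hx hy
    rw [chiMap_eq_iff φ h] at hx hy
    refine Or.inr ⟨?_, hlt⟩
    rw [hx, hy]

lemma chiMap_comp_apply {n m k : ℕ} (φ : IntHom n m) (ψ : IntHom m k) (i : Fin (n + 1)) :
    chiMap (intComp φ ψ) i = chiMap ψ (chiMap φ i) := by
  have hc : (intComp φ ψ).1 i.castSucc = ψ.1 (φ.1 i.castSucc) := rfl
  by_cases h : φ.1 i.castSucc = Fin.last (m + 1)
  · rw [chiMap_eq_zero_of_last φ h, chiMap_zero ψ]
    apply chiMap_eq_zero_of_last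
    rw [hc, h, ψ.2.2.2]
  · rw [chiMap_eq_of_ne_last φ h]
    by_cases h2 : ψ.1 (φ.1 i.castSucc) = Fin.last (k + 1)
    · rw [chiMap_eq_zero_of_last (intComp φ ψ) (by rw [hc]; exact h2),
        chiMap_eq_zero_of_last ψ (by rw [Fin.castSucc_castPred]; exact h2)]
    · rw [chiMap_eq_of_ne_last (intComp φ ψ) (by rw [hc]; exact h2),
        chiMap_eq_of_ne_last ψ (by rw [Fin.castSucc_castPred]; exact h2)]
      apply Fin.castSucc_injective
      rw [Fin.castSucc_castPred, Fin.castSucc_castPred, hc, Fin.castSucc_castPred]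

lemma pairwise_block {n m k : ℕ} (φ : IntHom n m) (ψ : IntHom m k) (t : Fin (m + 1)) :
    (chiOrd φ t).Pairwise (relC ((intComp φ ψ).1)) := by
  refine (pairwise_chiOrd φ t).imp_of_mem ?_
  intro x y hx hy hr
  rw [mem_chiOrd] at hx hy
  have hcx : (intComp φ ψ).1 x.castSucc = ψ.1 (φ.1 x.castSucc) := rfl
  have hcy : (intComp φ ψ).1 y.castSucc = ψ.1 (φ.1 y.castSucc) := rfl
  rcases hr with ⟨h1, h2⟩ | ⟨h1, h2⟩
  · -- φ x = last, φ y ≠ last; same fiber forces t = 0 and φ y = 0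
    have ht : t = 0 := by rw [← hx, chiMap_eq_zero_of_last φ h1]
    subst ht
    have hy0 : φ.1 y.castSucc = 0 := by
      rcases (chiMap_eq_zero_iff φ).1 hy with h | h
      · exact absurd h h2
      · exact h
    refine Or.inl ⟨by rw [hcx, h1, ψ.2.2.2], ?_⟩
    rw [hcy, hy0, ψ.2.2.1]
    exact zero_ne_last' k
  · by_cases hl : φ.1 x.castSucc = Fin.last (m + 1)
    · have hl' : φ.1 y.castSucc = Fin.last (m + 1) := h1.mp hl
      refine Or.inr ⟨?_, h2⟩
      rw [hcx, hcy, hl, hl']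
    · have hl' : φ.1 y.castSucc ≠ Fin.last (m + 1) := fun hh => hl (h1.mpr hh)
      have e1 : (φ.1 x.castSucc).castPred hl = t :=
        (chiMap_eq_of_ne_last φ hl).symm.trans hx
      have e2 : (φ.1 y.castSucc).castPred hl' = t :=
        (chiMap_eq_of_ne_last φ hl').symm.trans hy
      have : φ.1 x.castSucc = φ.1 y.castSucc := by
        rw [← Fin.castSucc_castPred (φ.1 x.castSucc) hl,
          ← Fin.castSucc_castPred (φ.1 y.castSucc) hl', e1, e2]
      refine Or.inr ⟨?_, h2⟩
      rw [hcx, hcy, this]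

lemma relC_cross {n m k : ℕ} (φ : IntHom n m) (ψ : IntHom m k) {t₁ t₂ : Fin (m + 1)}
    (h : relC ψ.1 t₁ t₂) :
    ∀ x ∈ chiOrd φ t₁, ∀ y ∈ chiOrd φ t₂, relC ((intComp φ ψ).1) x y := by
  intro x hx y hy
  rw [mem_chiOrd] at hx hy
  have hcx : (intComp φ ψ).1 x.castSucc = ψ.1 (φ.1 x.castSucc) := rfl
  have hcy : (intComp φ ψ).1 y.castSucc = ψ.1 (φ.1 y.castSucc) := rfl
  rcases h with ⟨h1, h2⟩ | ⟨h1, h2⟩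
  · -- ψ t₁ = last, ψ t₂ ≠ last
    have ht1 : t₁ ≠ 0 := by
      rintro rfl
      rw [Fin.castSucc_zero, ψ.2.2.1] at h1
      exact zero_ne_last' k h1
    have hx' : φ.1 x.castSucc = t₁.castSucc := (chiMap_eq_iff φ ht1).1 hx
    have hCx : (intComp φ ψ).1 x.castSucc = Fin.last (k + 1) := by
      rw [hcx, hx', h1]
    by_cases ht2 : t₂ = 0
    · subst ht2
      rcases (chiMap_eq_zero_iff φ).1 hy with hyl | hy0
      · -- φ y = last, so C y = last too; use order: φ x = t₁' < last = φ y
        refine Or.inr ⟨?_, ?_⟩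
        · rw [hCx, hcy, hyl, ψ.2.2.2]
        · exact lt_of_apply_lt φ (by rw [hx', hyl]; exact Fin.castSucc_lt_last t₁)
      · refine Or.inl ⟨hCx, ?_⟩
        rw [hcy, hy0, ψ.2.2.1]
        exact zero_ne_last' k
    · have hy' : φ.1 y.castSucc = t₂.castSucc := (chiMap_eq_iff φ ht2).1 hy
      refine Or.inl ⟨hCx, ?_⟩
      rw [hcy, hy']
      exact h2
  · -- (ψ t₁ = last ↔ ψ t₂ = last) and t₁ < t₂
    have ht2 : t₂ ≠ 0 := by
      rintro rfl
      exact absurd h2 (not_lt.2 (Fin.zero_le t₁))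
    have hy' : φ.1 y.castSucc = t₂.castSucc := (chiMap_eq_iff φ ht2).1 hy
    by_cases ht1 : t₁ = 0
    · subst ht1
      have hψ0 : ψ.1 ((0 : Fin (m + 1)).castSucc) = 0 := by
        rw [Fin.castSucc_zero, ψ.2.2.1]
      have hnt : ψ.1 t₂.castSucc ≠ Fin.last (k + 1) := fun hh =>
        zero_ne_last' k (hψ0 ▸ h1.mpr hh)
      rcases (chiMap_eq_zero_iff φ).1 hx with hxl | hx0
      · refine Or.inl ⟨by rw [hcx, hxl, ψ.2.2.2], by rw [hcy, hy']; exact hnt⟩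
      · refine Or.inr ⟨?_, ?_⟩
        · rw [hcx, hcy, hx0, hy', ψ.2.2.1]
          exact iff_of_false (zero_ne_last' k) hnt
        · refine lt_of_apply_lt φ ?_
          rw [hx0, hy']
          refine Fin.pos_of_ne_zero ?_
          intro hh
          apply ht2
          apply Fin.castSucc_injective
          rw [hh, Fin.castSucc_zero]
    · have hx' : φ.1 x.castSucc = t₁.castSucc := (chiMap_eq_iff φ ht1).1 hx
      refine Or.inr ⟨by rw [hcx, hcy, hx', hy']; exact h1, ?_⟩
      exact lt_of_apply_lt φ
        (by rw [hx', hy']; exact Fin.castSucc_lt_castSucc_iff.2 h2)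

lemma chiOrd_comp {n m k : ℕ} (φ : IntHom n m) (ψ : IntHom m k) (j : Fin (k + 1)) :
    chiOrd (intComp φ ψ) j = (chiOrd ψ j).flatMap (chiOrd φ) := by
  refine list_eq_of_pairwise (relC_irrefl ((intComp φ ψ).1))
    (fun {x y} => relC_antisymm ((intComp φ ψ).1)) (pairwise_chiOrd (intComp φ ψ) j) ?_ ?_
  · rw [List.pairwise_flatMap]
    refine ⟨fun t _ => pairwise_block φ ψ t, ?_⟩
    exact (pairwise_chiOrd ψ j).imp_of_mem (fun {a b} _ _ h => relC_cross φ ψ h)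
  · intro a
    rw [mem_chiOrd, List.mem_flatMap, chiMap_comp_apply]
    constructor
    · intro h
      exact ⟨chiMap φ a, (mem_chiOrd ψ _ _).2 h, (mem_chiOrd φ _ _).2 rfl⟩
    · rintro ⟨t, ht, ha⟩
      rw [mem_chiOrd] at ht ha
      rw [ha, ht]

lemma chiMap_id (n : ℕ) : chiMap (intId n) = id := by
  funext i
  have h : (intId n).1 i.castSucc ≠ Fin.last (n + 1) := (Fin.castSucc_lt_last i).ne
  rw [chiMap_eq_of_ne_last (intId n) h]
  apply Fin.castSucc_injective
  rw [Fin.castSucc_castPred]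
  rfl

end ChiAux

/-- `χ` is a well-defined functor `Δ^op → AB⊗_act`: each `χ(f)` is a well-formed
morphism (its underlying map restricts to a bijection `{0} → {0}` and its lists are
total orders on the fibers), and `χ` preserves identities and composition
(including the compatibility of the fiber orderings). -/
theorem chi_functor :
    (∀ (n m : ℕ) (φ : IntHom n m), ABWf (chi φ)) ∧
    (∀ n : ℕ, chi (intId n) = ABid (chiObj n)) ∧
    (∀ (n m k : ℕ) (φ : IntHom n m) (ψ : IntHom m k),
      chi (intComp φ ψ) = ABcomp (chi φ) (chi ψ)) := by
  refine ⟨?_, ?_, ?_⟩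
  · intro n m φ
    refine ⟨?_, fun t s => mem_chiOrd φ t s, ?_⟩
    · have h0 : chiMap φ 0 = 0 := chiMap_zero φ
      have key : Set.BijOn (chiMap φ) ({0} : Set (Fin (n + 1))) ({0} : Set (Fin (m + 1))) := by
        refine ⟨fun x hx => ?_, fun x hx y hy _ => ?_, fun y hy => ?_⟩
        · rw [Set.mem_singleton_iff] at hx ⊢
          rw [hx, h0]
        · rw [Set.mem_singleton_iff] at hx hy
          rw [hx, hy]
        · rw [Set.mem_singleton_iff] at hy
          exact ⟨0, rfl, by rw [h0, hy]⟩
      exact key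
    · intro t
      exact (pairwise_chiOrd φ t).imp
        (fun {a b} h => by rintro rfl; exact relC_irrefl _ _ h)
  · intro n
    unfold chi ABid
    congr 1
    · exact chiMap_id n
    · funext t
      refine list_eq_of_pairwise (relC_irrefl ((intId n).1))
        (fun {x y} => relC_antisymm ((intId n).1)) (pairwise_chiOrd (intId n) t)
        (List.pairwise_singleton _ _) ?_
      intro a
      rw [mem_chiOrd, chiMap_id]
      exact List.mem_singleton.symm
  · intro n m k φ ψ
    unfold chi ABcomp
    congr 1
    · funext i
      exact chiMap_comp_apply φ ψ i
    · funext j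
      exact chiOrd_comp φ ψ j
end
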